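/- A fuzzy frame F=(W,R) satisfies both (i) {w' : R(w,w')=1} is finite for every w ∈ W, and (ii) sup{R(w,w') : w'∈W, R(w,w')<1} < 1 for every w ∈ W, if and only if F ⊨_{KbiG} 𝟏 ⧀ ◇((p ⧀ q) ∧ q). -/

import Mathlib

/- Truth values: the real unit interval [0,1] with its complete lattice structure
   (so `sInf ∅ = 1` and `sSup ∅ = 0`). -/
instance : Fact ((0:ℝ) ≤ 1) := ⟨zero_le_one⟩

abbrev TV : Type := unitInterval

/-- Gödel implication: `a →G b = 1` if `a ≤ b`, else `b`. -/
noncomputable def gimp (a b : TV) : TV := if a ≤ b then 1 else b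

/-- Gödel coimplication: `a ⧀G b = 0` if `a ≤ b`, else `a`. -/
noncomputable def gcoimp (a b : TV) : TV := if a ≤ b then 0 else a

/-- ¬-free formulas: the language `biL_{□,◇}` over the countable variable set `ℕ`. -/
inductive FormulaB : Type
  | var : ℕ → FormulaB
  | and : FormulaB → FormulaB → FormulaB
  | or : FormulaB → FormulaB → FormulaB
  | imp : FormulaB → FormulaB → FormulaB
  | coimp : FormulaB → FormulaB → FormulaB
  | box : FormulaB → FormulaB
  | dia : FormulaB → FormulaB

/-- KbiG valuation on a fuzzy frame `(W, R)` with `R : W × W → [0,1]`: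
`v(□φ,w) = inf_{w'} (R(w,w') →G v(φ,w'))`, `v(◇φ,w) = sup_{w'} min(R(w,w'), v(φ,w'))`. -/
noncomputable def fval {W : Type} (R : W → W → TV) (v : ℕ → W → TV) :
    FormulaB → W → TV
  | .var p, w => v p w
  | .and φ ψ, w => fval R v φ w ⊓ fval R v ψ w
  | .or φ ψ, w => fval R v φ w ⊔ fval R v ψ w
  | .imp φ ψ, w => gimp (fval R v φ w) (fval R v ψ w)
  | .coimp φ ψ, w => gcoimp (fval R v φ w) (fval R v ψ w)
  | .box φ, w => ⨅ w', gimp (R w w') (fval R v φ w')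
  | .dia φ, w => ⨆ w', (R w w') ⊓ fval R v φ w'

/-- `𝟏 := p → p`. -/
def bone : FormulaB := .imp (.var 0) (.var 0)

/-- `𝟎 := p ⧀ p`. -/
def bzero : FormulaB := .coimp (.var 0) (.var 0)

/-- Gödel negation `∼φ := φ → 𝟎`. -/
def bnegG (φ : FormulaB) : FormulaB := .imp φ bzero

/-- Baaz delta `Δτ := ∼(𝟏 ⧀ τ)`. -/
def bDelta (τ : FormulaB) : FormulaB := bnegG (.coimp bone τ)

/-- The formula `𝟏 ⧀ ◇((p ⧀ q) ∧ q)` with `p := var 0`, `q := var 1`. -/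
def phiFin : FormulaB := .coimp bone (.dia (.and (.coimp (.var 0) (.var 1)) (.var 1)))

lemma tv_le_one (a : TV) : a ≤ 1 := unitInterval.le_one'

lemma tv_lt_one_of_ne {a : TV} (h : a ≠ 1) : a < 1 := lt_of_le_of_ne (tv_le_one a) h

lemma tv_zero_ne_one : (0 : TV) ≠ 1 := by
  intro h
  have := congrArg Subtype.val h
  norm_num at this

lemma one_inf (x : TV) : (1:TV) ⊓ x = x := inf_eq_right.mpr (tv_le_one x)

/-- key computation: value of phiFin -/
lemma phiFin_val {W : Type} (R : W → W → TV) (v : ℕ → W → TV) (w : W) :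
    fval R v phiFin w = 1 ↔
      (⨆ w', R w w' ⊓ (gcoimp (v 0 w') (v 1 w') ⊓ v 1 w')) < 1 := by
  have hone : fval R v bone w = 1 := by
    simp [bone, fval, gimp]
  show gcoimp (fval R v bone w) _ = 1 ↔ _
  rw [hone]
  simp only [phiFin, fval, gcoimp]
  split_ifs with h
  · exact iff_of_false (fun h0 => tv_zero_ne_one ((if_pos h).symm.trans h0)) (not_lt.mpr h)
  · exact iff_of_true (if_neg h) (not_le.mp h)

lemma inner_lt_one (a b : TV) : gcoimp a b ⊓ b < 1 := by
  unfold gcoimp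
  split_ifs with h
  · exact lt_of_le_of_lt inf_le_left (tv_lt_one_of_ne tv_zero_ne_one)
  · exact lt_of_le_of_lt inf_le_right ((not_le.mp h).trans_le (tv_le_one a))

/-- a fuzzy frame satisfies (i) `{w' | R(w,w') = 1}` finite for all `w` and
(ii) `sup {R(w,w') | R(w,w') < 1} < 1` for all `w`, iff it validates `𝟏 ⧀ ◇((p ⧀ q) ∧ q)`. -/
theorem stmt4 {W : Type} [Nonempty W] (R : W → W → TV) :
    ((∀ w : W, {w' | R w w' = 1}.Finite) ∧
     (∀ w : W, sSup {x : TV | ∃ w', R w w' < 1 ∧ R w w' = x} < 1)) ↔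
    (∀ (v : ℕ → W → TV) (w : W), fval R v phiFin w = 1) := by
  constructor
  · rintro ⟨hfin, hsup⟩ v w
    rw [phiFin_val]
    set f : W → TV := fun w' => gcoimp (v 0 w') (v 1 w') ⊓ v 1 w' with hf
    set T : Set TV := insert 0 (f '' {w' | R w w' = 1}) with hT
    have hTfin : T.Finite := Set.Finite.insert _ ((hfin w).image f)
    have hTne : T.Nonempty := ⟨0, Set.mem_insert _ _⟩
    have hTmem : sSup T ∈ T := hTne.csSup_mem hTfin
    have hTlt : sSup T < 1 := by
      rcases hTmem with h | ⟨w', _, heq⟩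
      · rw [h]; exact tv_lt_one_of_ne tv_zero_ne_one
      · rw [← heq]; exact inner_lt_one _ _
    set c : TV := sSup T ⊔ sSup {x : TV | ∃ w', R w w' < 1 ∧ R w w' = x} with hc
    have hclt : c < 1 := sup_lt_iff.mpr ⟨hTlt, hsup w⟩
    refine lt_of_le_of_lt (iSup_le fun w' => ?_) hclt
    by_cases hR : R w w' = 1
    · exact le_sup_left.trans'
        (le_trans inf_le_right (le_sSup (Set.mem_insert_of_mem _ ⟨w', hR, rfl⟩)))
    · have : R w w' < 1 := tv_lt_one_of_ne hR
      exact le_sup_right.trans' (le_trans inf_le_left (le_sSup ⟨w', this, rfl⟩))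
  · intro hval
    constructor
    · -- finiteness
      intro w
      by_contra hinf
      have hinf' : {w' | R w w' = 1}.Infinite := hinf
      obtain e := hinf'.natEmbedding
      have hmem : ∀ n : ℕ, (1 - 1/(n+2) : ℝ) ∈ Set.Icc (0:ℝ) 1 := by
        intro n
        constructor
        · have : (1:ℝ)/(n+2) ≤ 1 := by
            rw [div_le_one (by positivity)]; linarith [Nat.cast_nonneg (α := ℝ) n]
          linarith
        · have : (0:ℝ) < 1/(n+2) := by positivity
          linarith
      set c : ℕ → TV := fun n => ⟨1 - 1/(n+2), hmem n⟩ with hcdef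
      classical
      set g : W → TV := fun w' => if h : ∃ n, (e n : W) = w' then c (Nat.find h) else 0 with hg
      have hclt1 : ∀ n, c n < 1 := by
        intro n
        apply tv_lt_one_of_ne
        intro h'
        have h1 := congrArg Subtype.val h'
        simp only [hcdef] at h1
        have h2 : (0:ℝ) < 1/((n:ℝ)+2) := by positivity
        norm_num at h1
        linarith
      have hglt : ∀ w', g w' < 1 := by
        intro w'
        rw [hg]
        dsimp only
        split_ifs with h
        · exact hclt1 _
        · exact tv_lt_one_of_ne tv_zero_ne_one
      set v : ℕ → W → TV := fun k w' => if k = 0 then 1 else g w' with hv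
      have hDlt := hval v w
      rw [phiFin_val] at hDlt
      set D := ⨆ w', R w w' ⊓ (gcoimp (v 0 w') (v 1 w') ⊓ v 1 w') with hD
      have hge : ∀ n : ℕ, c n ≤ D := by
        intro n
        refine le_trans ?_ (le_iSup _ (e n : W))
        have hRe : R w (e n) = 1 := (e n).2
        have hv0 : v 0 (e n) = 1 := rfl
        have hv1 : v 1 (e n) = g (e n) := rfl
        have hge2 : g (e n : W) = c n := by
          rw [hg]
          dsimp only
          have hex : ∃ m, (e m : W) = (e n : W) := ⟨n, rfl⟩
          rw [dif_pos hex]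
          congr 1
          exact e.injective (Subtype.ext (Nat.find_spec hex))
        rw [hRe, hv0, hv1, hge2]
        have hco : gcoimp 1 (c n) = 1 := by
          rw [gcoimp, if_neg (not_le.mpr (hclt1 n))]
        rw [hco, one_inf, one_inf]
      have hDlt' : (D : ℝ) < 1 := hDlt
      obtain ⟨n, hn⟩ := exists_nat_gt (1/(1 - (D:ℝ)))
      have hpos : (0:ℝ) < 1 - D := by linarith
      have h1 : (1:ℝ)/(n+2) < 1 - D := by
        rw [div_lt_iff₀ (by positivity)]
        have h2 : 1/(1-(D:ℝ)) < (n:ℝ) + 2 := by linarith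
        calc (1:ℝ) = (1/(1-(D:ℝ))) * (1 - D) := by field_simp
          _ < ((n:ℝ)+2) * (1-D) := mul_lt_mul_of_pos_right h2 hpos
          _ = (1-D) * ((n:ℝ)+2) := by ring
      have h3 : (c n : ℝ) ≤ D := hge n
      simp only [hcdef] at h3
      change (1 - 1/((n:ℝ)+2) : ℝ) ≤ D at h3
      linarith
    · -- sup condition
      intro w
      classical
      set g : W → TV := fun w' => if R w w' < 1 then R w w' else 0 with hg
      set v : ℕ → W → TV := fun k w' => if k = 0 then 1 else g w' with hv
      have hDlt := hval v w
      rw [phiFin_val] at hDlt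
      refine lt_of_le_of_lt (sSup_le ?_) hDlt
      rintro x ⟨w', hlt, rfl⟩
      refine le_trans ?_ (le_iSup _ w')
      have hv0 : v 0 w' = 1 := rfl
      have hv1 : v 1 w' = g w' := rfl
      have hge : g w' = R w w' := by rw [hg]; exact if_pos hlt
      rw [hv0, hv1, hge]
      have hco : gcoimp 1 (R w w') = 1 := by
        rw [gcoimp, if_neg (not_le.mpr hlt)]
      rw [hco, one_inf, inf_idem]
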